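/- For every n ≥ 0, the following identity holds in the polynomial ring ℤ[x,a,b,c]: Σ_{T ∈ T_n} x^{singleton(T)} c^{evenp(T)} a^{des^o(T)} b^{asc^o(T)} = Σ_{i,j ≥ 0} θ_{n,i,j} x^{n+1−2(i+j)} c^{i} (a+b)^{j}, where θ_{n,i,j} = #{T ∈ T_n : evenp(T) = i, des^o(T) = j, asc^o(T) = 0}. -/

import Mathlib

open Finset

/-- An increasing tree on `[n]₀ = {0,1,…,n}`: each non-root vertex `v ∈ {1,…,n}` has a
parent `< v`. The vertex `k+1` (for `k : Fin n`) has parent `T k ∈ {0,…,k}`. -/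
abbrev ITree (n : ℕ) := ∀ k : Fin n, Fin ((k : ℕ) + 1)

/-- The parent of the vertex `v ∈ {1,…,n}` in `T` (junk value `n+1` otherwise). -/
def par (n : ℕ) (T : ITree n) (v : ℕ) : ℕ :=
  if h : 1 ≤ v ∧ v - 1 < n then (T ⟨v - 1, h.2⟩ : ℕ) else n + 1

/-- The set of children of the vertex `u` in `T`. -/
def childrenF (n : ℕ) (T : ITree n) (u : ℕ) : Finset ℕ :=
  (Finset.Icc 1 n).filter fun v => par n T v = u

/-- The number of children of the vertex `u` in `T`. -/
def childn (n : ℕ) (T : ITree n) (u : ℕ) : ℕ := (childrenF n T u).card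

/-- One pass of the tree-matching algorithm: given the set `used` of already matched
vertices, let `U` be the set of unmatched vertices having children; if `U ≠ ∅`, pick
`a = min U`, `b = min Child_T(a)`, record the pair `(a,b)` and continue. -/
def pairsAux (n : ℕ) (T : ITree n) : ℕ → Finset ℕ → Finset (ℕ × ℕ)
  | 0, _ => ∅
  | fuel + 1, used =>
    let U := (Finset.range (n + 1)).filter fun v => v ∉ used ∧ (childrenF n T v).Nonempty
    if U.Nonempty then
      let a := WithTop.untopD 0 U.min
      let b := WithTop.untopD 0 ((childrenF n T a).min)
      insert (a, b) (pairsAux n T fuel (insert a (insert b used)))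
    else ∅

/-- The tree-matching `M_T` of `T` (the algorithm stops after at most `n+1` steps). -/
def MT (n : ℕ) (T : ITree n) : Finset (ℕ × ℕ) := pairsAux n T (n + 1) ∅

/-- The number of tree-singletons: vertices of `[n]₀` occurring in no pair of `M_T`. -/
def singletonT (n : ℕ) (T : ITree n) : ℕ :=
  ((Finset.range (n + 1)).filter fun v => ∀ ab ∈ MT n T, v ≠ ab.1 ∧ v ≠ ab.2).card

/-- The number of even tree-pairs: pairs `(a,b) ∈ M_T` with
`child_T(a) + child_T(b) - 1` even. -/
def evenpT (n : ℕ) (T : ITree n) : ℕ :=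
  ((MT n T).filter fun ab => Even (childn n T ab.1 + childn n T ab.2 - 1)).card

/-- `max ((Child_T(a) ∪ Child_T(b)) \ {b})` for a pair `(a,b)` (junk value `0` if empty). -/
def maxOther (n : ℕ) (T : ITree n) (ab : ℕ × ℕ) : ℕ :=
  WithBot.unbotD 0 (((childrenF n T ab.1 ∪ childrenF n T ab.2).erase ab.2).max)

/-- The number of odd descent tree-pairs: odd pairs `(a,b) ∈ M_T` whose maximal
child `v = max ((Child_T(a) ∪ Child_T(b)) \ {b})` satisfies `p_T(v) = a`. -/
def desoT (n : ℕ) (T : ITree n) : ℕ :=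
  ((MT n T).filter fun ab => Odd (childn n T ab.1 + childn n T ab.2 - 1) ∧
    maxOther n T ab ∈ childrenF n T ab.1).card

/-- The number of odd ascent tree-pairs: odd pairs `(a,b) ∈ M_T` whose maximal
child `v = max ((Child_T(a) ∪ Child_T(b)) \ {b})` satisfies `p_T(v) = b`. -/
def ascoT (n : ℕ) (T : ITree n) : ℕ :=
  ((MT n T).filter fun ab => Odd (childn n T ab.1 + childn n T ab.2 - 1) ∧
    maxOther n T ab ∈ childrenF n T ab.2).card

open MvPolynomial

/-- `θ n i j = #{T ∈ T_n : evenp(T) = i, des^o(T) = j, asc^o(T) = 0}`. -/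
def theta (n i j : ℕ) : ℕ :=
  (Finset.univ.filter fun T : ITree n =>
    evenpT n T = i ∧ desoT n T = j ∧ ascoT n T = 0).card

section Basic
variable {n : ℕ} (T : ITree n)

lemma mem_childrenF {v u : ℕ} : v ∈ childrenF n T u ↔ (1 ≤ v ∧ v ≤ n) ∧ par n T v = u := by
  simp [childrenF, Finset.mem_Icc]

lemma par_lt {v : ℕ} (h1 : 1 ≤ v) (h2 : v ≤ n) : par n T v < v := by
  have hlt : v - 1 < n := by omega
  rw [par, dif_pos ⟨h1, hlt⟩]
  have h3 := (T ⟨v - 1, hlt⟩).isLt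
  have h4 : ((⟨v - 1, hlt⟩ : Fin n) : ℕ) = v - 1 := rfl
  omega

lemma lt_of_mem_childrenF {v u : ℕ} (h : v ∈ childrenF n T u) : u < v := by
  rw [mem_childrenF] at h
  have := par_lt T h.1.1 h.1.2
  omega

lemma childrenF_le {v u : ℕ} (h : v ∈ childrenF n T u) : v ≤ n := ((mem_childrenF T).1 h).1.2

lemma par_eq_of_mem {v u : ℕ} (h : v ∈ childrenF n T u) : par n T v = u := ((mem_childrenF T).1 h).2

lemma childrenF_disj {v u u' : ℕ} (h : v ∈ childrenF n T u) (h' : v ∈ childrenF n T u') : u = u' := by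
  exact (par_eq_of_mem T h).symm.trans (par_eq_of_mem T h')

end Basic
section PairsAux
variable {n : ℕ} {T : ITree n}

lemma untop'_min_mem {s : Finset ℕ} (h : s.Nonempty) : WithTop.untopD 0 s.min ∈ s := by
  rw [← Finset.coe_min' h]
  exact Finset.min'_mem s h

lemma untop'_min_le {s : Finset ℕ} (h : s.Nonempty) {x : ℕ} (hx : x ∈ s) :
    WithTop.untopD 0 s.min ≤ x := by
  rw [← Finset.coe_min' h]
  exact Finset.min'_le s x hx

/-- The invariant: every used vertex has a used parent. -/
def UsedInv (n : ℕ) (T : ITree n) (used : Finset ℕ) : Prop :=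
  ∀ w ∈ used, ∀ u, w ∈ childrenF n T u → u ∈ used

lemma pairsAux_mem {fuel : ℕ} {used : Finset ℕ} {x y : ℕ}
    (h : (x, y) ∈ pairsAux n T fuel used) :
    x ∉ used ∧ x ≤ n ∧ y ∈ childrenF n T x ∧ ∀ z ∈ childrenF n T x, y ≤ z := by
  induction fuel generalizing used x y with
  | zero => simp [pairsAux] at h
  | succ fuel ih =>
    rw [pairsAux] at h
    set U := (Finset.range (n + 1)).filter
      fun v => v ∉ used ∧ (childrenF n T v).Nonempty with hU
    by_cases hne : U.Nonempty
    · rw [if_pos hne] at h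
      set a := WithTop.untopD 0 U.min with ha
      have haU : a ∈ U := untop'_min_mem hne
      have haprop := Finset.mem_filter.1 haU
      have hcne : (childrenF n T a).Nonempty := haprop.2.2
      set b := WithTop.untopD 0 (childrenF n T a).min with hb
      have hbmem : b ∈ childrenF n T a := untop'_min_mem hcne
      rcases Finset.mem_insert.1 h with heq | hrec
      · have h1 : x = a := (Prod.mk.injEq _ _ _ _ ▸ heq).1
        have h2 : y = b := (Prod.mk.injEq _ _ _ _ ▸ heq).2
        subst h1; subst h2
        exact ⟨haprop.2.1, by have := Finset.mem_range.1 haprop.1; omega,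
          hbmem, fun z hz => untop'_min_le hcne hz⟩
      · have := ih hrec
        refine ⟨fun hx => this.1 ?_, this.2.1, this.2.2⟩
        exact Finset.mem_insert_of_mem (Finset.mem_insert_of_mem hx)
    · rw [if_neg hne] at h
      simp at h

lemma pairsAux_lt {fuel : ℕ} {used : Finset ℕ} {x y : ℕ}
    (h : (x, y) ∈ pairsAux n T fuel used) : x < y ∧ y ≤ n :=
  ⟨lt_of_mem_childrenF T (pairsAux_mem h).2.2.1, childrenF_le T (pairsAux_mem h).2.2.1⟩

lemma UsedInv_insert {used : Finset ℕ} (hI : UsedInv n T used) {a b : ℕ}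
    (haU : a ∉ used) (hamin : ∀ u, u ∉ used → (childrenF n T u).Nonempty → u ≤ n → a ≤ u)
    (hb : b ∈ childrenF n T a) :
    UsedInv n T (insert a (insert b used)) := by
  intro w hw u hu
  rcases Finset.mem_insert.1 hw with rfl | hw
  · -- w = a : parent of a must be used
    by_cases husd : u ∈ used
    · exact Finset.mem_insert_of_mem (Finset.mem_insert_of_mem husd)
    · exfalso
      have hua : u < w := lt_of_mem_childrenF T hu
      have hun : u ≤ n := by
        have := childrenF_le T hu; omega
      have := hamin u husd ⟨w, hu⟩ hun
      omega
  rcases Finset.mem_insert.1 hw with rfl | hw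
  · -- w = b : parent is a
    have : u = a := childrenF_disj T hu hb
    subst this; exact Finset.mem_insert_self _ _
  · exact Finset.mem_insert_of_mem (Finset.mem_insert_of_mem (hI w hw u hu))

lemma pairsAux_snd_not_mem {fuel : ℕ} {used : Finset ℕ} (hI : UsedInv n T used) {x y : ℕ}
    (h : (x, y) ∈ pairsAux n T fuel used) : y ∉ used := by
  intro hy
  have hmem := pairsAux_mem h
  exact hmem.1 (hI y hy x hmem.2.2.1)

lemma min_spec_of_Uset {used : Finset ℕ}
    (hne : ((Finset.range (n + 1)).filter
      fun v => v ∉ used ∧ (childrenF n T v).Nonempty).Nonempty) :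
    ∀ u, u ∉ used → (childrenF n T u).Nonempty → u ≤ n →
      WithTop.untopD 0 ((Finset.range (n + 1)).filter
        fun v => v ∉ used ∧ (childrenF n T v).Nonempty).min ≤ u := by
  intro u h1 h2 h3
  exact untop'_min_le hne (Finset.mem_filter.2 ⟨Finset.mem_range.2 (by omega), h1, h2⟩)

lemma pairsAux_disjoint {fuel : ℕ} {used : Finset ℕ} (hI : UsedInv n T used) {p q : ℕ × ℕ}
    (hp : p ∈ pairsAux n T fuel used) (hq : q ∈ pairsAux n T fuel used) (hne : p ≠ q) :
    p.1 ≠ q.1 ∧ p.1 ≠ q.2 ∧ p.2 ≠ q.1 ∧ p.2 ≠ q.2 := by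
  induction fuel generalizing used with
  | zero => simp [pairsAux] at hp
  | succ fuel ih =>
    rw [pairsAux] at hp hq
    set U := (Finset.range (n + 1)).filter
      fun v => v ∉ used ∧ (childrenF n T v).Nonempty with hU
    by_cases hUne : U.Nonempty
    · rw [if_pos hUne] at hp hq
      set a := WithTop.untopD 0 U.min with ha
      have haU : a ∈ U := untop'_min_mem hUne
      have haprop := Finset.mem_filter.1 haU
      have hcne : (childrenF n T a).Nonempty := haprop.2.2
      set b := WithTop.untopD 0 (childrenF n T a).min with hb
      have hbmem : b ∈ childrenF n T a := untop'_min_mem hcne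
      have hI' : UsedInv n T (insert a (insert b used)) :=
        UsedInv_insert hI haprop.2.1 (min_spec_of_Uset hUne) hbmem
      have key : ∀ r : ℕ × ℕ, r ∈ pairsAux n T fuel (insert a (insert b used)) →
          r.1 ≠ a ∧ r.1 ≠ b ∧ r.2 ≠ a ∧ r.2 ≠ b := by
        intro r hr
        have h1 := (pairsAux_mem (show (r.1, r.2) ∈ _ from hr)).1
        have h2 := pairsAux_snd_not_mem hI' (show (r.1, r.2) ∈ _ from hr)
        simp only [Finset.mem_insert, not_or] at h1 h2
        exact ⟨h1.1, h1.2.1, h2.1, h2.2.1⟩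
      rcases Finset.mem_insert.1 hp with rfl | hprec
      · rcases Finset.mem_insert.1 hq with heq | hqrec
        · exact absurd heq.symm hne
        · have := key q hqrec
          exact ⟨fun h => this.1 h.symm, fun h => this.2.2.1 h.symm,
            fun h => this.2.1 h.symm, fun h => this.2.2.2 h.symm⟩
      rcases Finset.mem_insert.1 hq with rfl | hqrec
      · have := key p hprec
        exact ⟨this.1, this.2.1, this.2.2.1, this.2.2.2⟩
      · exact ih hI' hprec hqrec
    · rw [if_neg hUne] at hp
      simp at hp

lemma UsedInv_empty : UsedInv n T ∅ := by intro w hw; simp at hw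

lemma MT_mem {x y : ℕ} (h : (x, y) ∈ MT n T) :
    x < y ∧ y ≤ n ∧ y ∈ childrenF n T x ∧ ∀ z ∈ childrenF n T x, y ≤ z :=
  ⟨(pairsAux_lt h).1, (pairsAux_lt h).2, (pairsAux_mem h).2.2⟩

lemma MT_disjoint {p q : ℕ × ℕ} (hp : p ∈ MT n T) (hq : q ∈ MT n T) (hne : p ≠ q) :
    p.1 ≠ q.1 ∧ p.1 ≠ q.2 ∧ p.2 ≠ q.1 ∧ p.2 ≠ q.2 :=
  pairsAux_disjoint UsedInv_empty hp hq hne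

end PairsAux
section Counts
variable {n : ℕ} {T : ITree n}

lemma unbot'_max_mem {s : Finset ℕ} (h : s.Nonempty) : WithBot.unbotD 0 s.max ∈ s := by
  rw [← Finset.coe_max' h]
  exact Finset.max'_mem s h

lemma unbot'_max_ge {s : Finset ℕ} (h : s.Nonempty) {x : ℕ} (hx : x ∈ s) :
    x ≤ WithBot.unbotD 0 s.max := by
  rw [← Finset.coe_max' h]
  exact Finset.le_max' s x hx

lemma singletonT_eq : singletonT n T = (n + 1) - 2 * (MT n T).card ∧
    2 * (MT n T).card ≤ n + 1 := by
  classical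
  set M := MT n T with hM
  set B : Finset ℕ := M.biUnion (fun p => {p.1, p.2}) with hB
  have hcardB : B.card = 2 * M.card := by
    rw [hB, Finset.card_biUnion]
    · rw [Finset.sum_congr rfl (fun p hp => ?_), Finset.sum_const, smul_eq_mul, mul_comm]
      have h1 : p.1 ≠ p.2 := by
        have := (MT_mem (show (p.1, p.2) ∈ M from hp)).1; omega
      rw [Finset.card_insert_of_notMem (by simpa using h1), Finset.card_singleton]
    · intro p hp q hq hne
      have hd := MT_disjoint (show (p.1, p.2) ∈ M from hp) (show (q.1, q.2) ∈ M from hq)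
        (by simpa using hne)
      simp only [Finset.disjoint_left, Finset.mem_insert, Finset.mem_singleton]
      rintro x (rfl | rfl) (h | h) <;> simp_all
  have hBsub : B ⊆ Finset.range (n + 1) := by
    intro v hv
    simp only [hB, Finset.mem_biUnion, Finset.mem_insert, Finset.mem_singleton] at hv
    obtain ⟨p, hp, rfl | rfl⟩ := hv
    · have := MT_mem (show (p.1, p.2) ∈ M from hp)
      exact Finset.mem_range.2 (by omega)
    · have := MT_mem (show (p.1, p.2) ∈ M from hp)
      exact Finset.mem_range.2 (by omega)
  have hfilter : (Finset.range (n + 1)).filter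
      (fun v => ∀ ab ∈ M, v ≠ ab.1 ∧ v ≠ ab.2) = Finset.range (n + 1) \ B := by
    ext v
    simp only [Finset.mem_filter, Finset.mem_sdiff, hB, Finset.mem_biUnion,
      Finset.mem_insert, Finset.mem_singleton]
    constructor
    · rintro ⟨hv, h⟩
      refine ⟨hv, ?_⟩
      rintro ⟨p, hp, rfl | rfl⟩
      · exact (h p hp).1 rfl
      · exact (h p hp).2 rfl
    · rintro ⟨hv, h⟩
      refine ⟨hv, fun ab hab => ⟨fun he => h ⟨ab, hab, Or.inl he⟩,
        fun he => h ⟨ab, hab, Or.inr he⟩⟩⟩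
  have hcard : ((Finset.range (n + 1)).filter
      (fun v => ∀ ab ∈ M, v ≠ ab.1 ∧ v ≠ ab.2)).card = (n + 1) - B.card := by
    rw [hfilter, Finset.card_sdiff_of_subset hBsub, Finset.card_range]
  have hle : B.card ≤ n + 1 := by
    have := Finset.card_le_card hBsub
    simpa using this
  constructor
  · rw [singletonT, ← hM, hcard, hcardB]
  · omega

lemma maxOther_spec {a b : ℕ} (hab : (a, b) ∈ MT n T)
    (hodd : Odd (childn n T a + childn n T b - 1)) :
    b < maxOther n T (a, b) ∧
      ((maxOther n T (a, b) ∈ childrenF n T a ∧ maxOther n T (a, b) ∉ childrenF n T b) ∨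
       (maxOther n T (a, b) ∈ childrenF n T b ∧ maxOther n T (a, b) ∉ childrenF n T a)) := by
  classical
  obtain ⟨hlt, hbn, hbmem, hbmin⟩ := MT_mem hab
  set W : Finset ℕ := (childrenF n T a ∪ childrenF n T b).erase b with hW
  have hsum : 2 ≤ childn n T a + childn n T b := by
    rcases hodd with ⟨k, hk⟩
    have h1 : 1 ≤ childn n T a := Finset.card_pos.2 ⟨b, hbmem⟩
    omega
  simp only [childn] at hsum
  have hWne : W.Nonempty := by
    by_cases h2 : 2 ≤ (childrenF n T a).card
    · obtain ⟨w, hw, hne⟩ := Finset.exists_mem_ne (s := childrenF n T a) (by omega) b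
      exact ⟨w, Finset.mem_erase.2 ⟨hne, Finset.mem_union_left _ hw⟩⟩
    · have h1 : (childrenF n T a).card = 1 := by
        have : 1 ≤ (childrenF n T a).card := Finset.card_pos.2 ⟨b, hbmem⟩
        omega
      have h2 : 1 ≤ (childrenF n T b).card := by omega
      obtain ⟨w, hw⟩ := Finset.card_pos.1 h2
      have : b < w := lt_of_mem_childrenF T hw
      exact ⟨w, Finset.mem_erase.2 ⟨by omega, Finset.mem_union_right _ hw⟩⟩
  have hmem : maxOther n T (a, b) ∈ W := by
    rw [maxOther]
    exact unbot'_max_mem hWne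
  rw [hW, Finset.mem_erase, Finset.mem_union] at hmem
  obtain ⟨hne, hmem'⟩ := hmem
  have hgt : b < maxOther n T (a, b) := by
    rcases hmem' with h | h
    · have := hbmin _ h
      omega
    · exact lt_of_mem_childrenF T h
  refine ⟨hgt, ?_⟩
  have hanb : a ≠ b := by omega
  rcases hmem' with h | h
  · exact Or.inl ⟨h, fun h' => hanb (childrenF_disj T h h')⟩
  · exact Or.inr ⟨h, fun h' => hanb (childrenF_disj T h' h)⟩

lemma MT_card_split : (MT n T).card = evenpT n T + desoT n T + ascoT n T := by
  classical
  rw [evenpT, desoT, ascoT]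
  have h1 : (MT n T).card =
      ((MT n T).filter fun ab => Even (childn n T ab.1 + childn n T ab.2 - 1)).card +
      ((MT n T).filter fun ab => Odd (childn n T ab.1 + childn n T ab.2 - 1)).card := by
    conv_lhs => rw [← Finset.card_filter_add_card_filter_not
      (p := fun ab => Even (childn n T ab.1 + childn n T ab.2 - 1))]
    congr 2
    apply Finset.filter_congr
    intro ab _
    simp [Nat.not_even_iff_odd]
  rw [h1]
  have h2 : ((MT n T).filter fun ab => Odd (childn n T ab.1 + childn n T ab.2 - 1)) =
      ((MT n T).filter fun ab => Odd (childn n T ab.1 + childn n T ab.2 - 1) ∧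
        maxOther n T ab ∈ childrenF n T ab.1) ∪
      ((MT n T).filter fun ab => Odd (childn n T ab.1 + childn n T ab.2 - 1) ∧
        maxOther n T ab ∈ childrenF n T ab.2) := by
    rw [← Finset.filter_or]
    apply Finset.filter_congr
    intro ab hab
    have := maxOther_spec (show (ab.1, ab.2) ∈ MT n T from hab)
    constructor
    · intro ho
      rcases (this ho).2 with h | h
      · exact Or.inl ⟨ho, h.1⟩
      · exact Or.inr ⟨ho, h.1⟩
    · rintro (⟨ho, _⟩ | ⟨ho, _⟩) <;> exact ho
  have hdisj : Disjoint
      ((MT n T).filter fun ab => Odd (childn n T ab.1 + childn n T ab.2 - 1) ∧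
        maxOther n T ab ∈ childrenF n T ab.1)
      ((MT n T).filter fun ab => Odd (childn n T ab.1 + childn n T ab.2 - 1) ∧
        maxOther n T ab ∈ childrenF n T ab.2) := by
    rw [Finset.disjoint_filter]
    rintro ab hab ⟨ho, hmem⟩ ⟨_, hmem'⟩
    rcases (maxOther_spec (show (ab.1, ab.2) ∈ MT n T from hab) ho).2 with h | h
    · exact h.2 hmem'
    · exact h.2 hmem
  rw [h2, Finset.card_union_of_disjoint hdisj]
  omega
end Counts
section Toggle
variable {n : ℕ} {T : ITree n}

/-- The set of odd pairs of `T`. -/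
def oddSetF (n : ℕ) (T : ITree n) : Finset (ℕ × ℕ) :=
  (MT n T).filter fun ab => Odd (childn n T ab.1 + childn n T ab.2 - 1)

/-- The set of odd ascent pairs of `T`. -/
def ascSetF (n : ℕ) (T : ITree n) : Finset (ℕ × ℕ) :=
  (oddSetF n T).filter fun ab => maxOther n T ab ∈ childrenF n T ab.2

/-- The set of odd descent pairs of `T`. -/
def desSetF (n : ℕ) (T : ITree n) : Finset (ℕ × ℕ) :=
  (oddSetF n T).filter fun ab => maxOther n T ab ∈ childrenF n T ab.1

lemma ascoT_eq : ascoT n T = (ascSetF n T).card := by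
  rw [ascoT, ascSetF, oddSetF, Finset.filter_filter]

lemma desoT_eq : desoT n T = (desSetF n T).card := by
  rw [desoT, desSetF, oddSetF, Finset.filter_filter]

/-- Simultaneously toggle, for each pair `p ∈ S`, the parent of the vertex
`maxOther T p` between `p.1` and `p.2`. -/
noncomputable def mtog (n : ℕ) (T : ITree n) (S : Finset (ℕ × ℕ)) : ITree n := fun k =>
  if h : ∃ p ∈ S, maxOther n T p = (k : ℕ) + 1 ∧ p.1 + p.2 - (T k : ℕ) ≤ (k : ℕ)
  then ⟨h.choose.1 + h.choose.2 - (T k : ℕ), by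
    have := h.choose_spec.2.2; omega⟩
  else T k

/-- Facts about an odd pair and its `maxOther`. -/
lemma odd_pair_facts {p : ℕ × ℕ} (hp : p ∈ oddSetF n T) :
    p ∈ MT n T ∧ p.1 < p.2 ∧ p.2 ≤ n ∧ p.2 ∈ childrenF n T p.1 ∧
      (∀ z ∈ childrenF n T p.1, p.2 ≤ z) ∧
      p.2 < maxOther n T p ∧ maxOther n T p ≤ n ∧
      (maxOther n T p ∈ childrenF n T p.1 ∨ maxOther n T p ∈ childrenF n T p.2) := by
  rw [oddSetF, Finset.mem_filter] at hp
  obtain ⟨hmt, hodd⟩ := hp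
  have hm := MT_mem (show (p.1, p.2) ∈ MT n T from hmt)
  have hsp := maxOther_spec (show (p.1, p.2) ∈ MT n T from hmt) hodd
  have hmo : maxOther n T p = maxOther n T (p.1, p.2) := rfl
  rw [hmo]
  refine ⟨hmt, hm.1, hm.2.1, hm.2.2.1, hm.2.2.2, hsp.1, ?_, ?_⟩
  · rcases hsp.2 with h | h
    · exact childrenF_le T h.1
    · exact childrenF_le T h.1
  · rcases hsp.2 with h | h
    · exact Or.inl h.1
    · exact Or.inr h.1

lemma maxOther_inj {S : Finset (ℕ × ℕ)} (hS : S ⊆ oddSetF n T) {p q : ℕ × ℕ}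
    (hp : p ∈ S) (hq : q ∈ S) (h : maxOther n T p = maxOther n T q) : p = q := by
  by_contra hne
  have fp := odd_pair_facts (hS hp)
  have fq := odd_pair_facts (hS hq)
  have hd := MT_disjoint fp.1 fq.1 hne
  rcases fp.2.2.2.2.2.2.2 with h1 | h1 <;> rcases fq.2.2.2.2.2.2.2 with h2 | h2 <;>
    rw [h] at h1
  · exact hd.1 (childrenF_disj T h1 h2)
  · exact hd.2.1 (childrenF_disj T h1 h2)
  · exact hd.2.2.1 (childrenF_disj T h1 h2)
  · exact hd.2.2.2 (childrenF_disj T h1 h2)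

/-- Parent of a toggled vertex. -/
lemma par_mtog_eq {S : Finset (ℕ × ℕ)} (hS : S ⊆ oddSetF n T) {p : ℕ × ℕ}
    (hp : p ∈ S) :
    par n (mtog n T S) (maxOther n T p) = p.1 + p.2 - par n T (maxOther n T p) ∧
    par n T (maxOther n T p) + par n (mtog n T S) (maxOther n T p) = p.1 + p.2 := by
  have f := odd_pair_facts (hS hp)
  set v := maxOther n T p with hv
  have hv1 : 1 ≤ v := by omega
  have hvn : v ≤ n := f.2.2.2.2.2.2.1
  have hvlt : v - 1 < n := by omega
  have hparv : par n T v = p.1 ∨ par n T v = p.2 := by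
    rcases f.2.2.2.2.2.2.2 with h | h
    · exact Or.inl (par_eq_of_mem T h)
    · exact Or.inr (par_eq_of_mem T h)
  have hparlt : par n T v < v := par_lt T hv1 hvn
  have hTk : (T ⟨v - 1, hvlt⟩ : ℕ) = par n T v := by
    rw [par, dif_pos ⟨hv1, hvlt⟩]
  have hbound : p.1 + p.2 - (T ⟨v - 1, hvlt⟩ : ℕ) ≤ v - 1 := by
    rw [hTk]
    rcases hparv with h | h <;> omega
  have hk : (((⟨v - 1, hvlt⟩ : Fin n)) : ℕ) = v - 1 := rfl
  have hex : ∃ q ∈ S, maxOther n T q = ((⟨v - 1, hvlt⟩ : Fin n) : ℕ) + 1 ∧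
      q.1 + q.2 - (T ⟨v - 1, hvlt⟩ : ℕ) ≤ ((⟨v - 1, hvlt⟩ : Fin n) : ℕ) :=
    ⟨p, hp, by omega, by omega⟩
  have hch : hex.choose = p := by
    have hs := hex.choose_spec
    have h2 := hs.2.1
    exact maxOther_inj hS hs.1 hp (by omega)
  have happ : ((mtog n T S) ⟨v - 1, hvlt⟩ : ℕ) =
      hex.choose.1 + hex.choose.2 - (T ⟨v - 1, hvlt⟩ : ℕ) := by
    rw [mtog, dif_pos hex]
  have : par n (mtog n T S) v = p.1 + p.2 - par n T v := by
    rw [par, dif_pos ⟨hv1, hvlt⟩]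
    show ((mtog n T S) ⟨v - 1, hvlt⟩ : ℕ) = _
    rw [happ, hch, hTk]
  refine ⟨this, ?_⟩
  rw [this]
  rcases hparv with h | h <;> omega

/-- Parent of a non-toggled vertex. -/
lemma par_mtog_eq_of_ne {S : Finset (ℕ × ℕ)} (hS : S ⊆ oddSetF n T) {v : ℕ}
    (hv : ∀ p ∈ S, maxOther n T p ≠ v) :
    par n (mtog n T S) v = par n T v := by
  by_cases hb : 1 ≤ v ∧ v - 1 < n
  · rw [par, par, dif_pos hb, dif_pos hb]
    show ((mtog n T S) ⟨v - 1, hb.2⟩ : ℕ) = _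
    rw [mtog]
    rw [dif_neg]
    rintro ⟨q, hq, hqe, -⟩
    have hk : (((⟨v - 1, hb.2⟩ : Fin n)) : ℕ) = v - 1 := rfl
    exact hv q hq (by omega)
  · rw [par, par, dif_neg hb, dif_neg hb]

end Toggle
section Toggle2
variable {n : ℕ} {T : ITree n} {S : Finset (ℕ × ℕ)}

lemma par_flip (hS : S ⊆ oddSetF n T) {p : ℕ × ℕ} (hp : p ∈ S) :
    (par n T (maxOther n T p) = p.1 ∧ par n (mtog n T S) (maxOther n T p) = p.2) ∨
    (par n T (maxOther n T p) = p.2 ∧ par n (mtog n T S) (maxOther n T p) = p.1) := by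
  have f := odd_pair_facts (hS hp)
  have h2 := (par_mtog_eq hS hp).2
  have hlt : p.1 < p.2 := f.2.1
  rcases f.2.2.2.2.2.2.2 with h | h
  · exact Or.inl ⟨par_eq_of_mem T h, by have := par_eq_of_mem T h; omega⟩
  · exact Or.inr ⟨par_eq_of_mem T h, by have := par_eq_of_mem T h; omega⟩

lemma mem_children_mtog_of_ne (hS : S ⊆ oddSetF n T) {w u : ℕ}
    (hw : ∀ p ∈ S, maxOther n T p ≠ w) :
    (w ∈ childrenF n (mtog n T S) u ↔ w ∈ childrenF n T u) := by
  rw [mem_childrenF, mem_childrenF, par_mtog_eq_of_ne hS hw]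

/-- `maxOther q` (for `q ∈ S`) is not a child of any vertex outside `{q.1, q.2}`,
in either tree. -/
lemma maxOther_not_child (hS : S ⊆ oddSetF n T) {q : ℕ × ℕ} (hq : q ∈ S) {u : ℕ}
    (hu1 : u ≠ q.1) (hu2 : u ≠ q.2) :
    maxOther n T q ∉ childrenF n T u ∧ maxOther n T q ∉ childrenF n (mtog n T S) u := by
  have hf := par_flip hS hq
  constructor
  · intro hmem
    have := par_eq_of_mem T hmem
    rcases hf with ⟨h1, _⟩ | ⟨h1, _⟩ <;> omega
  · intro hmem
    have := par_eq_of_mem (mtog n T S) hmem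
    rcases hf with ⟨_, h1⟩ | ⟨_, h1⟩ <;> omega

lemma maxOther_ne_snd (hS : S ⊆ oddSetF n T) {q p : ℕ × ℕ} (hq : q ∈ S)
    (hp : p ∈ oddSetF n T) : maxOther n T q ≠ p.2 := by
  intro he
  have fq := odd_pair_facts (hS hq)
  have fp := odd_pair_facts hp
  by_cases hqp : q = p
  · subst hqp; omega
  · have hpmem : p.2 ∈ childrenF n T p.1 := fp.2.2.2.1
    rw [← he] at hpmem
    have hd := MT_disjoint fq.1 fp.1 hqp
    have := (maxOther_not_child hS hq (u := p.1) (fun h => hd.1 h.symm)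
      (fun h => hd.2.2.1 h.symm)).1
    exact this hpmem

lemma snd_mem_children_mtog (hS : S ⊆ oddSetF n T) {p : ℕ × ℕ} (hp : p ∈ S) :
    p.2 ∈ childrenF n (mtog n T S) p.1 ∧
      ∀ z ∈ childrenF n (mtog n T S) p.1, p.2 ≤ z := by
  have f := odd_pair_facts (hS hp)
  constructor
  · rw [mem_children_mtog_of_ne hS (fun q hq => maxOther_ne_snd hS hq (hS hp))]
    exact f.2.2.2.1
  · intro z hz
    by_cases hzm : ∃ q ∈ S, maxOther n T q = z
    · obtain ⟨q, hq, rfl⟩ := hzm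
      by_cases hqp : q = p
      · subst hqp; omega
      · have hd := MT_disjoint (odd_pair_facts (hS hq)).1 f.1 hqp
        exact absurd hz
          (maxOther_not_child hS hq (u := p.1) (fun h => hd.1 h.symm)
            (fun h => hd.2.2.1 h.symm)).2
    · push_neg at hzm
      rw [mem_children_mtog_of_ne hS hzm] at hz
      exact f.2.2.2.2.1 z hz

lemma children_union_mtog (hS : S ⊆ oddSetF n T) {p : ℕ × ℕ} (hp : p ∈ S) :
    childrenF n (mtog n T S) p.1 ∪ childrenF n (mtog n T S) p.2 =
      childrenF n T p.1 ∪ childrenF n T p.2 := by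
  have f := odd_pair_facts (hS hp)
  ext w
  simp only [Finset.mem_union]
  by_cases hwm : ∃ q ∈ S, maxOther n T q = w
  · obtain ⟨q, hq, rfl⟩ := hwm
    by_cases hqp : q = p
    · subst hqp
      have hf := par_flip hS hq
      have fq := odd_pair_facts (hS hq)
      have hb : 1 ≤ maxOther n T q ∧ maxOther n T q ≤ n := ⟨by omega, fq.2.2.2.2.2.2.1⟩
      simp only [mem_childrenF, hb, true_and]
      rcases hf with ⟨h1, h2⟩ | ⟨h1, h2⟩ <;> rw [h1, h2] <;> omega
    · have hd := MT_disjoint (odd_pair_facts (hS hq)).1 f.1 hqp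
      have h1 := maxOther_not_child hS hq (u := p.1) (fun h => hd.1 h.symm)
        (fun h => hd.2.2.1 h.symm)
      have h2 := maxOther_not_child hS hq (u := p.2) (fun h => hd.2.1 h.symm)
        (fun h => hd.2.2.2 h.symm)
      constructor
      · rintro (h | h)
        · exact absurd h h1.2
        · exact absurd h h2.2
      · rintro (h | h)
        · exact absurd h h1.1
        · exact absurd h h2.1
  · push_neg at hwm
    rw [mem_children_mtog_of_ne hS hwm, mem_children_mtog_of_ne hS hwm]

lemma childn_sum_mtog (hS : S ⊆ oddSetF n T) {p : ℕ × ℕ} (hp : p ∈ S) :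
    childn n (mtog n T S) p.1 + childn n (mtog n T S) p.2 =
      childn n T p.1 + childn n T p.2 := by
  have f := odd_pair_facts (hS hp)
  have hne : p.1 ≠ p.2 := by omega
  have hdis : ∀ (T' : ITree n), Disjoint (childrenF n T' p.1) (childrenF n T' p.2) := by
    intro T'
    rw [Finset.disjoint_left]
    intro w h1 h2
    exact hne (childrenF_disj T' h1 h2)
  simp only [childn]
  rw [← Finset.card_union_of_disjoint (hdis (mtog n T S)),
    ← Finset.card_union_of_disjoint (hdis T), children_union_mtog hS hp]

lemma childrenF_mtog_off (hS : S ⊆ oddSetF n T) {u : ℕ}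
    (hu : ∀ p ∈ S, u ≠ p.1 ∧ u ≠ p.2) :
    childrenF n (mtog n T S) u = childrenF n T u := by
  ext w
  by_cases hwm : ∃ q ∈ S, maxOther n T q = w
  · obtain ⟨q, hq, rfl⟩ := hwm
    have h := maxOther_not_child hS hq (hu q hq).1 (hu q hq).2
    simp [h.1, h.2]
  · push_neg at hwm
    exact mem_children_mtog_of_ne hS hwm
end Toggle2
section Toggle3
variable {n : ℕ} {T : ITree n} {S : Finset (ℕ × ℕ)}

lemma pairsAux_mtog (hS : S ⊆ oddSetF n T) :
    ∀ fuel used, UsedInv n T used →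
      (∀ p ∈ S, p ∈ pairsAux n T fuel used ∨ (p.1 ∈ used ∧ p.2 ∈ used)) →
      pairsAux n (mtog n T S) fuel used = pairsAux n T fuel used := by
  intro fuel
  induction fuel with
  | zero => intro used _ _; rw [pairsAux, pairsAux]
  | succ fuel ih =>
    intro used hI hP
    set T' := mtog n T S with hT'
    set U := (Finset.range (n + 1)).filter
      (fun v => v ∉ used ∧ (childrenF n T v).Nonempty) with hU
    set U' := (Finset.range (n + 1)).filter
      (fun v => v ∉ used ∧ (childrenF n T' v).Nonempty) with hU'
    -- transfer of membership between U and U'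
    have htrans : ∀ v ∈ U, v ∈ U' ∨ ∃ p ∈ S, v = p.2 ∧ p ∈ pairsAux n T (fuel + 1) used := by
      intro v hv
      obtain ⟨hvr, hvu, hvne⟩ := Finset.mem_filter.1 hv
      by_cases hco : ∃ p ∈ S, v = p.1 ∨ v = p.2
      · obtain ⟨p, hp, hc | hc⟩ := hco
        · subst hc
          refine Or.inl (Finset.mem_filter.2 ⟨hvr, hvu, ⟨p.2, (snd_mem_children_mtog hS hp).1⟩⟩)
        · subst hc
          rcases hP p hp with h | h
          · exact Or.inr ⟨p, hp, rfl, h⟩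
          · exact absurd h.2 hvu
      · push_neg at hco
        refine Or.inl (Finset.mem_filter.2 ⟨hvr, hvu, ?_⟩)
        rw [childrenF_mtog_off hS (fun p hp => hco p hp)]
        exact hvne
    have htrans' : ∀ v ∈ U', v ∈ U ∨ ∃ p ∈ S, v = p.2 ∧ p ∈ pairsAux n T (fuel + 1) used := by
      intro v hv
      obtain ⟨hvr, hvu, hvne⟩ := Finset.mem_filter.1 hv
      by_cases hco : ∃ p ∈ S, v = p.1 ∨ v = p.2
      · obtain ⟨p, hp, hc | hc⟩ := hco
        · subst hc
          refine Or.inl (Finset.mem_filter.2 ⟨hvr, hvu,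
            ⟨p.2, (odd_pair_facts (hS hp)).2.2.2.1⟩⟩)
        · subst hc
          rcases hP p hp with h | h
          · exact Or.inr ⟨p, hp, rfl, h⟩
          · exact absurd h.2 hvu
      · push_neg at hco
        refine Or.inl (Finset.mem_filter.2 ⟨hvr, hvu, ?_⟩)
        rw [childrenF_mtog_off hS (fun p hp => hco p hp)] at hvne
        exact hvne
    -- the first coordinate of an S-pair still to be matched belongs to both U and U'
    have hfst : ∀ p ∈ S, p ∈ pairsAux n T (fuel + 1) used → p.1 ∈ U ∧ p.1 ∈ U' := by
      intro p hp hpp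
      have hm := pairsAux_mem (show (p.1, p.2) ∈ _ from hpp)
      refine ⟨Finset.mem_filter.2 ⟨Finset.mem_range.2 (by omega), hm.1,
          ⟨p.2, (odd_pair_facts (hS hp)).2.2.2.1⟩⟩,
        Finset.mem_filter.2 ⟨Finset.mem_range.2 (by omega), hm.1,
          ⟨p.2, (snd_mem_children_mtog hS hp).1⟩⟩⟩
    by_cases hne : U.Nonempty
    · have hne' : U'.Nonempty := by
        obtain ⟨v, hv⟩ := hne
        rcases htrans v hv with h | ⟨p, hp, rfl, hpp⟩
        · exact ⟨v, h⟩
        · exact ⟨p.1, (hfst p hp hpp).2⟩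
      set m := WithTop.untopD 0 U.min with hm
      set m' := WithTop.untopD 0 U'.min with hm'
      have hmU : m ∈ U := untop'_min_mem hne
      have hm'U : m' ∈ U' := untop'_min_mem hne'
      -- m = m'
      have hmm : m = m' := by
        have h1 : m' ≤ m := by
          rcases htrans m hmU with h | ⟨p, hp, he, hpp⟩
          · exact untop'_min_le hne' h
          · have h2 := untop'_min_le hne' (hfst p hp hpp).2
            have h3 := (odd_pair_facts (hS hp)).2.1
            omega
        have h2 : m ≤ m' := by
          rcases htrans' m' hm'U with h | ⟨p, hp, he, hpp⟩
          · exact untop'_min_le hne h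
          · have h2 := untop'_min_le hne (hfst p hp hpp).1
            have h3 := (odd_pair_facts (hS hp)).2.1
            omega
        omega
      -- the chosen second coordinates agree
      have hmused : m ∉ used := (Finset.mem_filter.1 hmU).2.1
      have hmchild : (childrenF n T m).Nonempty := (Finset.mem_filter.1 hmU).2.2
      set c := WithTop.untopD 0 (childrenF n T m).min with hc
      have hcmem : c ∈ childrenF n T m := untop'_min_mem hmchild
      have hcc : WithTop.untopD 0 (childrenF n T' m).min = c := by
        by_cases hco : ∃ p ∈ S, m = p.1 ∨ m = p.2
        · obtain ⟨p, hp, hcase | hcase⟩ := hco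
          · -- m = p.1 : both minima are p.2
            rw [hcase] at hmused hmchild hcmem hc ⊢
            have hpp : p ∈ pairsAux n T (fuel + 1) used := by
              rcases hP p hp with h | h
              · exact h
              · exact absurd h.1 hmused
            have hmm2 := pairsAux_mem (show (p.1, p.2) ∈ _ from hpp)
            have hs := snd_mem_children_mtog hS hp
            have h1 : WithTop.untopD 0 (childrenF n T' p.1).min = p.2 := by
              have hne2 : (childrenF n T' p.1).Nonempty := ⟨p.2, hs.1⟩
              have ha := untop'_min_mem hne2
              have hb := untop'_min_le hne2 hs.1
              have hc2 := hs.2 _ ha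
              omega
            have h2 : c = p.2 := by
              have hb := untop'_min_le hmchild hmm2.2.2.1
              have hc2 := hmm2.2.2.2 _ hcmem
              omega
            rw [h1, h2]
          · -- m = p.2 : impossible
            exfalso
            rw [hcase] at hmused
            have hpp : p ∈ pairsAux n T (fuel + 1) used := by
              rcases hP p hp with h | h
              · exact h
              · exact absurd h.2 hmused
            have h2 := untop'_min_le hne (hfst p hp hpp).1
            have h3 := (odd_pair_facts (hS hp)).2.1
            omega
        · push_neg at hco
          rw [childrenF_mtog_off hS (fun p hp => hco p hp)]
      -- both sides take one step with the same pair (m, c)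
      rw [pairsAux, pairsAux]
      simp only [← hU, ← hU', if_pos hne, if_pos hne']
      rw [← hm, ← hm', ← hmm, hcc, ← hc]

      congr 1
      have hIstep : UsedInv n T (insert m (insert c used)) :=
        UsedInv_insert hI hmused (min_spec_of_Uset hne) hcmem
      apply ih _ hIstep
      intro p hp
      rcases hP p hp with h | h
      · rw [pairsAux] at h
        simp only [← hU, if_pos hne] at h
        rw [← hm, ← hc] at h
        rcases Finset.mem_insert.1 h with h | h
        · right
          rw [h]
          exact ⟨Finset.mem_insert_self _ _,
            Finset.mem_insert_of_mem (Finset.mem_insert_self _ _)⟩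
        · exact Or.inl h
      · exact Or.inr ⟨Finset.mem_insert_of_mem (Finset.mem_insert_of_mem h.1),
          Finset.mem_insert_of_mem (Finset.mem_insert_of_mem h.2)⟩
    · have hne' : ¬U'.Nonempty := by
        intro h
        obtain ⟨v, hv⟩ := h
        rcases htrans' v hv with h | ⟨p, hp, rfl, hpp⟩
        · exact hne ⟨v, h⟩
        · exact hne ⟨p.1, (hfst p hp hpp).1⟩
      rw [pairsAux, pairsAux]
      simp only [← hU, ← hU', if_neg hne, if_neg hne']

lemma MT_mtog (hS : S ⊆ oddSetF n T) : MT n (mtog n T S) = MT n T := by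
  rw [MT, MT]
  apply pairsAux_mtog hS _ _ UsedInv_empty
  intro p hp
  exact Or.inl (hS hp |> fun h => (Finset.mem_filter.1 h).1)

end Toggle3
section Toggle4
variable {n : ℕ} {T : ITree n} {S : Finset (ℕ × ℕ)}

lemma coords_off (hS : S ⊆ oddSetF n T) {q : ℕ × ℕ} (hq : q ∈ MT n T) (hqS : q ∉ S) :
    ∀ p ∈ S, (q.1 ≠ p.1 ∧ q.1 ≠ p.2) ∧ (q.2 ≠ p.1 ∧ q.2 ≠ p.2) := by
  intro p hp
  have hd := MT_disjoint hq (odd_pair_facts (hS hp)).1 (fun h => hqS (h ▸ hp))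
  exact ⟨⟨hd.1, hd.2.1⟩, ⟨hd.2.2.1, hd.2.2.2⟩⟩

lemma childn_sum_eq (hS : S ⊆ oddSetF n T) {q : ℕ × ℕ} (hq : q ∈ MT n T) :
    childn n (mtog n T S) q.1 + childn n (mtog n T S) q.2 =
      childn n T q.1 + childn n T q.2 := by
  by_cases hqS : q ∈ S
  · exact childn_sum_mtog hS hqS
  · have hco := coords_off hS hq hqS
    rw [childn, childn, childrenF_mtog_off hS (fun p hp => (hco p hp).1),
      childrenF_mtog_off hS (fun p hp => (hco p hp).2), childn, childn]

lemma maxOther_mtog (hS : S ⊆ oddSetF n T) {q : ℕ × ℕ} (hq : q ∈ MT n T) :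
    maxOther n (mtog n T S) q = maxOther n T q := by
  by_cases hqS : q ∈ S
  · rw [maxOther, maxOther]
    have := children_union_mtog hS hqS
    rw [show childrenF n (mtog n T S) (q.1, q.2).1 ∪ childrenF n (mtog n T S) (q.1, q.2).2
        = childrenF n T (q.1, q.2).1 ∪ childrenF n T (q.1, q.2).2 from this]
  · have hco := coords_off hS hq hqS
    rw [maxOther, maxOther, childrenF_mtog_off hS (fun p hp => (hco p hp).1),
      childrenF_mtog_off hS (fun p hp => (hco p hp).2)]

lemma oddSetF_mtog (hS : S ⊆ oddSetF n T) : oddSetF n (mtog n T S) = oddSetF n T := by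
  rw [oddSetF, oddSetF, MT_mtog hS]
  apply Finset.filter_congr
  intro q hq
  rw [childn_sum_eq hS hq]

lemma evenpT_mtog (hS : S ⊆ oddSetF n T) : evenpT n (mtog n T S) = evenpT n T := by
  rw [evenpT, evenpT, MT_mtog hS]
  congr 1
  apply Finset.filter_congr
  intro q hq
  rw [childn_sum_eq hS hq]

lemma singletonT_mtog (hS : S ⊆ oddSetF n T) : singletonT n (mtog n T S) = singletonT n T := by
  rw [singletonT, singletonT, MT_mtog hS]

lemma flip_iff (hS : S ⊆ oddSetF n T) {q : ℕ × ℕ} (hq : q ∈ S) :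
    (maxOther n T q ∈ childrenF n (mtog n T S) q.2 ↔
      maxOther n T q ∈ childrenF n T q.1) ∧
    (maxOther n T q ∈ childrenF n (mtog n T S) q.1 ↔
      maxOther n T q ∈ childrenF n T q.2) := by
  have f := odd_pair_facts (hS hq)
  have hb : (1 ≤ maxOther n T q ∧ maxOther n T q ≤ n) := ⟨by omega, f.2.2.2.2.2.2.1⟩
  simp only [mem_childrenF, hb, true_and]
  rcases par_flip hS hq with ⟨h1, h2⟩ | ⟨h1, h2⟩ <;> rw [h1, h2] <;> omega

lemma ascSetF_subset' : ascSetF n T ⊆ oddSetF n T := Finset.filter_subset _ _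
lemma desSetF_subset' : desSetF n T ⊆ oddSetF n T := Finset.filter_subset _ _

lemma mem_ascSetF_mtog (hS : S ⊆ oddSetF n T) {q : ℕ × ℕ} :
    q ∈ ascSetF n (mtog n T S) ↔
      (q ∈ S ∧ q ∈ desSetF n T) ∨ (q ∉ S ∧ q ∈ ascSetF n T) := by
  rw [ascSetF, Finset.mem_filter, oddSetF_mtog hS]
  by_cases hqo : q ∈ oddSetF n T
  · have hq : q ∈ MT n T := (Finset.mem_filter.1 hqo).1
    rw [maxOther_mtog hS hq]
    by_cases hqS : q ∈ S
    · rw [desSetF, Finset.mem_filter]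
      simp only [hqo, hqS, true_and, not_true, false_and, or_false]
      exact (flip_iff hS hqS).1
    · have hco := coords_off hS hq hqS
      rw [childrenF_mtog_off hS (fun p hp => (hco p hp).2)]
      rw [ascSetF, Finset.mem_filter]
      simp [hqo, hqS]
  · constructor
    · intro h; exact absurd h.1 hqo
    · rintro (⟨_, h⟩ | ⟨_, h⟩)
      · exact absurd (desSetF_subset' h) hqo
      · exact absurd (ascSetF_subset' h) hqo

lemma oddSetF_card : (oddSetF n T).card = desoT n T + ascoT n T := by
  rw [desoT_eq, ascoT_eq]
  have h1 : (oddSetF n T).filter (fun ab => maxOther n T ab ∈ childrenF n T ab.1)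
      = desSetF n T := rfl
  have h2 : (oddSetF n T).filter (fun ab => ¬ maxOther n T ab ∈ childrenF n T ab.1)
      = ascSetF n T := by
    rw [ascSetF]
    apply Finset.filter_congr
    intro ab hab
    obtain ⟨hmt, hodd⟩ := Finset.mem_filter.1 hab
    rcases (maxOther_spec (show (ab.1, ab.2) ∈ MT n T from hmt) hodd).2 with h | h <;>
      simp [h.1, h.2]
  rw [← h1, ← h2, Finset.card_filter_add_card_filter_not]

lemma par_eq_of_par {w : ℕ} (hS : S ⊆ oddSetF n T)
    (hS' : S ⊆ oddSetF n (mtog n T S)) :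
    par n (mtog n (mtog n T S) S) w = par n T w := by
  by_cases hwm : ∃ p ∈ S, maxOther n T p = w
  · obtain ⟨p, hp, hpe⟩ := hwm
    have hmo : maxOther n (mtog n T S) p = w := by
      rw [maxOther_mtog hS (odd_pair_facts (hS hp)).1, hpe]
    have h1 := (par_mtog_eq hS' hp).2
    rw [hmo] at h1
    have h2 := (par_mtog_eq hS hp).2
    rw [hpe] at h2
    have h3 := par_flip hS hp
    rw [hpe] at h3
    rcases h3 with ⟨ha, hb⟩ | ⟨ha, hb⟩ <;> omega
  · push_neg at hwm
    have hwm' : ∀ p ∈ S, maxOther n (mtog n T S) p ≠ w := by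
      intro p hp
      rw [maxOther_mtog hS (odd_pair_facts (hS hp)).1]
      exact hwm p hp
    rw [par_mtog_eq_of_ne hS' hwm', par_mtog_eq_of_ne hS hwm]

lemma mtog_mtog (hS : S ⊆ oddSetF n T) : mtog n (mtog n T S) S = T := by
  have hS' : S ⊆ oddSetF n (mtog n T S) := by rw [oddSetF_mtog hS]; exact hS
  funext k
  apply Fin.ext
  have hb : 1 ≤ (k : ℕ) + 1 ∧ (k : ℕ) + 1 - 1 < n := ⟨by omega, by have := k.isLt; omega⟩
  have hfe : (⟨(k : ℕ) + 1 - 1, hb.2⟩ : Fin n) = k := by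
    apply Fin.ext; simp
  have h1 : ∀ (T'' : ITree n), par n T'' ((k : ℕ) + 1) = (T'' k : ℕ) := by
    intro T''
    rw [par, dif_pos hb, hfe]
  rw [← h1, ← h1, par_eq_of_par hS hS']

end Toggle4
section Counting
variable {n : ℕ} {T : ITree n}

lemma oddSetF_eq_union : oddSetF n T = desSetF n T ∪ ascSetF n T := by
  ext q
  simp only [Finset.mem_union, desSetF, ascSetF, Finset.mem_filter]
  constructor
  · intro hq
    obtain ⟨hmt, hodd⟩ := Finset.mem_filter.1 hq
    rcases (maxOther_spec (show (q.1, q.2) ∈ MT n T from hmt) hodd).2 with h | h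
    · exact Or.inl ⟨hq, h.1⟩
    · exact Or.inr ⟨hq, h.1⟩
  · rintro (⟨h, _⟩ | ⟨h, _⟩) <;> exact h

lemma ascSetF_empty (h : ascoT n T = 0) : ascSetF n T = ∅ :=
  Finset.card_eq_zero.1 (by rw [← ascoT_eq]; exact h)

lemma count_eq (n : ℕ) (i d e : ℕ) :
    (Finset.univ.filter fun T : ITree n =>
        evenpT n T = i ∧ desoT n T = d ∧ ascoT n T = e).card =
      (d + e).choose e * theta n i (d + e) := by
  classical
  set A := Finset.univ.filter fun T : ITree n =>
    evenpT n T = i ∧ desoT n T = d ∧ ascoT n T = e with hA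
  set A0 := Finset.univ.filter fun T : ITree n =>
    evenpT n T = i ∧ desoT n T = d + e ∧ ascoT n T = 0 with hA0
  have htheta : theta n i (d + e) = A0.card := rfl
  set s : Finset ((_ : ITree n) × Finset (ℕ × ℕ)) :=
    A0.sigma (fun T₀ => Finset.powersetCard e (oddSetF n T₀)) with hs
  -- facts about elements of A0
  have hA0fact : ∀ T₀ ∈ A0, desSetF n T₀ = oddSetF n T₀ ∧ ascSetF n T₀ = ∅ ∧
      (oddSetF n T₀).card = d + e := by
    intro T₀ hT₀
    obtain ⟨-, he, hd, ha⟩ := Finset.mem_filter.1 hT₀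
    have hasc : ascSetF n T₀ = ∅ := ascSetF_empty ha
    refine ⟨?_, hasc, ?_⟩
    · rw [oddSetF_eq_union (T := T₀), hasc, Finset.union_empty]
    · rw [oddSetF_card, hd, ha]; omega
  -- forward map lands in A
  have hmapsto : ∀ x ∈ s, mtog n x.1 x.2 ∈ A := by
    rintro ⟨T₀, S⟩ hx
    dsimp only at hx ⊢
    obtain ⟨hT₀, hSmem⟩ := Finset.mem_sigma.1 hx
    obtain ⟨hSsub, hScard⟩ := Finset.mem_powersetCard.1 hSmem
    obtain ⟨hdes, hasc, hcard⟩ := hA0fact T₀ hT₀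
    obtain ⟨-, he, hd, ha⟩ := Finset.mem_filter.1 hT₀
    have hascT : ascSetF n (mtog n T₀ S) = S := by
      ext q
      rw [mem_ascSetF_mtog hSsub]
      constructor
      · rintro (⟨h, _⟩ | ⟨_, h⟩)
        · exact h
        · rw [hasc] at h; exact absurd h (Finset.notMem_empty q)
      · intro hq
        exact Or.inl ⟨hq, hdes ▸ hSsub hq⟩
    have hodd : oddSetF n (mtog n T₀ S) = oddSetF n T₀ := oddSetF_mtog hSsub
    refine Finset.mem_filter.2 ⟨Finset.mem_univ _, evenpT_mtog hSsub ▸ he, ?_, ?_⟩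
    · have h1 : (oddSetF n (mtog n T₀ S)).card =
          desoT n (mtog n T₀ S) + ascoT n (mtog n T₀ S) := oddSetF_card
      have h2 : ascoT n (mtog n T₀ S) = e := by rw [ascoT_eq, hascT, hScard]
      rw [hodd, hcard] at h1
      omega
    · rw [ascoT_eq, hascT, hScard]
  -- backward map lands in s
  have hmapsfrom : ∀ T ∈ A, (⟨mtog n T (ascSetF n T), ascSetF n T⟩ :
      (_ : ITree n) × Finset (ℕ × ℕ)) ∈ s := by
    intro T hT
    obtain ⟨-, he, hd, ha⟩ := Finset.mem_filter.1 hT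
    have hsub : ascSetF n T ⊆ oddSetF n T := ascSetF_subset'
    have hodd : oddSetF n (mtog n T (ascSetF n T)) = oddSetF n T := oddSetF_mtog hsub
    have hasc0 : ascSetF n (mtog n T (ascSetF n T)) = ∅ := by
      ext q
      rw [mem_ascSetF_mtog hsub]
      simp only [Finset.notMem_empty, iff_false, not_or]
      constructor
      · rintro ⟨hq, hqd⟩
        have := Finset.mem_filter.1 hq
        have hdq := Finset.mem_filter.1 hqd
        rcases (maxOther_spec
          (show (q.1, q.2) ∈ MT n T from (Finset.mem_filter.1 this.1).1)
          (Finset.mem_filter.1 this.1).2).2 with h | h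
        · exact h.2 this.2
        · exact h.2 hdq.2
      · rintro ⟨hq, hqa⟩
        exact hq hqa
    refine Finset.mem_sigma.2 ⟨Finset.mem_filter.2 ⟨Finset.mem_univ _, ?_, ?_, ?_⟩, ?_⟩ <;>
      dsimp only
    · rw [evenpT_mtog hsub]; exact he
    · have h1 : (oddSetF n (mtog n T (ascSetF n T))).card =
          desoT n (mtog n T (ascSetF n T)) + ascoT n (mtog n T (ascSetF n T)) :=
        oddSetF_card
      have h2 : ascoT n (mtog n T (ascSetF n T)) = 0 := by
        rw [ascoT_eq, hasc0, Finset.card_empty]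
      have h3 : (oddSetF n T).card = d + e := by
        rw [oddSetF_card, hd, ha]
      rw [hodd, h3] at h1
      omega
    · rw [ascoT_eq, hasc0, Finset.card_empty]
    · refine Finset.mem_powersetCard.2 ⟨?_, ?_⟩
      · rw [hodd]; exact hsub
      · rw [← ascoT_eq]; exact ha
  have hcards : s.card = A.card := by
    apply Finset.card_bij' (fun x _ => mtog n x.1 x.2)
      (fun T _ => ⟨mtog n T (ascSetF n T), ascSetF n T⟩)
    · rintro ⟨T₀, S⟩ hx
      dsimp only at hx ⊢
      obtain ⟨hT₀, hSmem⟩ := Finset.mem_sigma.1 hx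
      obtain ⟨hSsub, hScard⟩ := Finset.mem_powersetCard.1 hSmem
      obtain ⟨hdes, hasc, hcard⟩ := hA0fact T₀ hT₀
      have hascT : ascSetF n (mtog n T₀ S) = S := by
        ext q
        rw [mem_ascSetF_mtog hSsub]
        constructor
        · rintro (⟨h, _⟩ | ⟨_, h⟩)
          · exact h
          · rw [hasc] at h; exact absurd h (Finset.notMem_empty q)
        · intro hq
          exact Or.inl ⟨hq, hdes ▸ hSsub hq⟩
      rw [hascT, mtog_mtog hSsub]
    · intro T hT
      dsimp only
      exact mtog_mtog ascSetF_subset'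
    · exact hmapsto
    · exact hmapsfrom
  rw [htheta, ← hcards, hs, Finset.card_sigma]
  rw [Finset.sum_congr rfl (fun T₀ hT₀ => ?_), Finset.sum_const, smul_eq_mul, mul_comm]
  rw [Finset.card_powersetCard, (hA0fact T₀ hT₀).2.2]

end Counting
section Assembly
variable {n : ℕ}

lemma stat_card_le (T : ITree n) :
    2 * (evenpT n T + desoT n T + ascoT n T) ≤ n + 1 ∧
      singletonT n T = n + 1 - 2 * (evenpT n T + desoT n T + ascoT n T) := by
  have h1 := singletonT_eq (T := T)
  have h2 := MT_card_split (T := T)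
  rw [h2] at h1
  exact ⟨h1.2, h1.1⟩

lemma theta_zero {i j : ℕ} (h : n + 1 < 2 * (i + j)) : theta n i j = 0 := by
  rw [theta, Finset.card_eq_zero]
  rw [Finset.filter_eq_empty_iff]
  rintro T - ⟨he, hd, ha⟩
  have := (stat_card_le T).1
  omega
theorem stmt18 (n : ℕ) :
    (∑ T : ITree n,
        X 0 ^ singletonT n T * X 3 ^ evenpT n T * X 1 ^ desoT n T *
          X 2 ^ ascoT n T : MvPolynomial (Fin 4) ℤ) =
      ∑ i ∈ Finset.range (n + 2), ∑ j ∈ Finset.range (n + 2),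
        theta n i j •
          (X 0 ^ (n + 1 - 2 * (i + j)) * X 3 ^ i * (X 1 + X 2) ^ j) := by
  classical
  set mono : ℕ → ℕ → ℕ → MvPolynomial (Fin 4) ℤ := fun i d e =>
    X 0 ^ (n + 1 - 2 * (i + d + e)) * X 3 ^ i * X 1 ^ d * X 2 ^ e with hmono
  have hmaps : ∀ T : ITree n, T ∈ (Finset.univ : Finset (ITree n)) →
      (evenpT n T, desoT n T, ascoT n T) ∈
        Finset.range (n+2) ×ˢ Finset.range (n+2) ×ˢ Finset.range (n+2) := by
    intro T _
    have := (stat_card_le T).1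
    simp only [Finset.mem_product, Finset.mem_range]
    omega
  have hstep1 : (∑ T : ITree n, X 0 ^ singletonT n T * X 3 ^ evenpT n T * X 1 ^ desoT n T *
          X 2 ^ ascoT n T : MvPolynomial (Fin 4) ℤ)
      = ∑ y ∈ Finset.range (n+2) ×ˢ Finset.range (n+2) ×ˢ Finset.range (n+2),
          (((y.2.1 + y.2.2).choose y.2.2) * theta n y.1 (y.2.1 + y.2.2)) •
            mono y.1 y.2.1 y.2.2 := by
    rw [← Finset.sum_fiberwise_of_maps_to hmaps]
    apply Finset.sum_congr rfl
    intro y hy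
    have hterm : ∀ T ∈ Finset.univ.filter (fun T : ITree n =>
        (evenpT n T, desoT n T, ascoT n T) = y),
        (X 0 ^ singletonT n T * X 3 ^ evenpT n T * X 1 ^ desoT n T *
          X 2 ^ ascoT n T : MvPolynomial (Fin 4) ℤ) = mono y.1 y.2.1 y.2.2 := by
      intro T hT
      have hgy := (Finset.mem_filter.1 hT).2
      have h1 := (stat_card_le T).2
      rw [← hgy]
      dsimp only
      rw [hmono, h1]
    rw [Finset.sum_congr rfl hterm, Finset.sum_const]
    have hcard : (Finset.univ.filter (fun T : ITree n =>
        (evenpT n T, desoT n T, ascoT n T) = y)).card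
        = ((y.2.1 + y.2.2).choose y.2.2) * theta n y.1 (y.2.1 + y.2.2) := by
      rw [← count_eq]
      congr 1
      apply Finset.filter_congr
      intro T _
      simp [Prod.ext_iff]
    rw [hcard]
  have hstep2 : (∑ i ∈ Finset.range (n + 2), ∑ j ∈ Finset.range (n + 2),
        theta n i j • (X 0 ^ (n + 1 - 2 * (i + j)) * X 3 ^ i * (X 1 + X 2) ^ j
          : MvPolynomial (Fin 4) ℤ))
      = ∑ i ∈ Finset.range (n+2), ∑ j ∈ Finset.range (n+2), ∑ m ∈ Finset.range (j+1),
          (theta n i j * j.choose m) • mono i m (j - m) := by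
    apply Finset.sum_congr rfl; intro i _
    apply Finset.sum_congr rfl; intro j hj
    rw [add_pow, Finset.mul_sum, Finset.smul_sum]
    apply Finset.sum_congr rfl; intro m hm
    have hm' : m ≤ j := Nat.lt_succ_iff.1 (Finset.mem_range.1 hm)
    rw [hmono]
    dsimp only
    rw [show i + m + (j - m) = i + j from by omega]
    simp only [nsmul_eq_mul, Nat.cast_mul]
    ring
  rw [hstep1, hstep2, Finset.sum_product]
  apply Finset.sum_congr rfl
  intro i _
  dsimp only
  rw [Finset.sum_sigma' (Finset.range (n+2)) (fun j => Finset.range (j+1))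
    (fun j m => (theta n i j * j.choose m) • mono i m (j - m))]
  have hzero : ∀ z ∈ Finset.range (n+2) ×ˢ Finset.range (n+2),
      (((z.1 + z.2).choose z.2 * theta n i (z.1 + z.2)) • mono i z.1 z.2 ≠ 0) →
        z.1 + z.2 ≤ n + 1 := by
    intro z _ hz
    by_contra hgt
    apply hz
    rw [theta_zero (by omega), mul_zero, zero_smul]
  rw [← Finset.sum_filter_of_ne hzero]
  apply Finset.sum_nbij' (fun z => (⟨z.1 + z.2, z.1⟩ : Σ _ : ℕ, ℕ))
    (fun p => ((p.2 : ℕ), p.1 - p.2))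
  · intro z hz
    obtain ⟨hzp, hzs⟩ := Finset.mem_filter.1 hz
    obtain ⟨h1, h2⟩ := Finset.mem_product.1 hzp
    rw [Finset.mem_range] at h1 h2
    refine Finset.mem_sigma.2 ⟨?_, ?_⟩ <;> dsimp only <;> rw [Finset.mem_range] <;> omega
  · intro p hp
    obtain ⟨h1, h2⟩ := Finset.mem_sigma.1 hp
    rw [Finset.mem_range] at h1 h2
    refine Finset.mem_filter.2 ⟨Finset.mem_product.2
      ⟨Finset.mem_range.2 (by omega), Finset.mem_range.2 (by omega)⟩, by omega⟩
  · intro z hz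
    obtain ⟨hzp, hzs⟩ := Finset.mem_filter.1 hz
    ext <;> dsimp only <;> omega
  · intro p hp
    obtain ⟨h1, h2⟩ := Finset.mem_sigma.1 hp
    rw [Finset.mem_range] at h1 h2
    have : p.2 + (p.1 - p.2) = p.1 := by omega
    exact Sigma.ext (by dsimp only; omega) (by dsimp only; exact HEq.rfl)
  · intro z hz
    obtain ⟨hzp, hzs⟩ := Finset.mem_filter.1 hz
    dsimp only
    rw [show z.1 + z.2 - z.1 = z.2 from by omega]
    rw [show (z.1 + z.2).choose z.1 = (z.1 + z.2).choose z.2 from Nat.choose_symm_add]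
    rw [mul_comm]
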